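/- arXiv:2403.19567 — 2 statements merged into one kernel-verified Lean document; each statement's English description precedes it below -/
import Mathlib

section
/- Let (X,B) be a standard Borel space. For every Polish topology τ on X generating B there is a countable collection of mappings ξ_n : F*_τ(X) → X, n ∈ ℕ, defined on the Effros space of infinite τ-closed subsets of X, such that: (1) each ξ_n is Effros-measurable; (2) for each infinite closed set F, the map n ↦ ξ_n(F) is injective; (3) for each infinite closed set F, the set {ξ_n(F) : n ∈ ℕ} is a dense subset of F. -/
/-!
Statement 10 (measurable injective selection): for every Polish topology `τ`
generating the Borel σ-algebra of a standard Borel space `(X, B)`, there is a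
countable family `ξ_n : F*_τ(X) → X` of Effros-measurable maps on the space of
infinite `τ`-closed sets which, for each such set `F`, selects injectively a dense
subset of `F`.
-/

open MeasureTheory Filter Topology Metric TopologicalSpace Set
open scoped Classical

noncomputable section

/-- The Effros Borel space: the set of `τ`-closed subsets of `X`. -/
def EffrosSpace {X : Type*} (τ : TopologicalSpace X) : Type _ :=
  {F : Set X // @IsClosed X τ F}

/-- The Effros σ-algebra, generated by the sets `B_O = {F closed | F ∩ O ≠ ∅}`,
`O` open. -/
instance {X : Type*} (τ : TopologicalSpace X) : MeasurableSpace (EffrosSpace τ) :=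
  MeasurableSpace.generateFrom
    {s | ∃ O : Set X, @IsOpen X τ O ∧ s = {F : EffrosSpace τ | (F.1 ∩ O).Nonempty}}

/-- The Effros space of *infinite* `τ`-closed subsets of `X`, with the induced
Effros σ-algebra. -/
def EffrosStar {X : Type*} (τ : TopologicalSpace X) : Type _ :=
  {F : Set X // @IsClosed X τ F ∧ F.Infinite}

instance {X : Type*} (τ : TopologicalSpace X) : MeasurableSpace (EffrosStar τ) :=
  MeasurableSpace.generateFrom
    {s | ∃ O : Set X, @IsOpen X τ O ∧ s = {F : EffrosStar τ | (F.1 ∩ O).Nonempty}}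

/-- A set `F ⊆ X` is `τ`-discrete if every point of `F` is isolated in `F`. -/
def IsTauDiscrete {X : Type*} (τ : TopologicalSpace X) (F : Set X) : Prop :=
  ∀ x ∈ F, ∃ O : Set X, @IsOpen X τ O ∧ x ∈ O ∧ F ∩ O = {x}

/-- Generic "least witness with default 0". -/
def pickIdx (E : ℕ → Prop) : ℕ := if h : ∃ i, E i then Nat.find h else 0

lemma pickIdx_le {E : ℕ → Prop} {n : ℕ} (hn : E n) : pickIdx E ≤ n := by
  rw [pickIdx, dif_pos ⟨n, hn⟩]; exact Nat.find_min' _ hn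

lemma pickIdx_spec {E : ℕ → Prop} (h : ∃ i, E i) : E (pickIdx E) := by
  rw [pickIdx, dif_pos h]; exact Nat.find_spec h

lemma measurable_pickIdx {α : Type*} [MeasurableSpace α] {E : ℕ → α → Prop}
    (hE : ∀ i, MeasurableSet {a | E i a}) :
    Measurable fun a => pickIdx (fun i => E i a) := by
  apply measurable_to_countable'
  intro j
  have hset : (fun a => pickIdx (fun i => E i a)) ⁻¹' {j} =
      ({a | E j a} ∩ ⋂ i, ⋂ _ : i < j, {a | E i a}ᶜ) ∪
      ({a : α | j = 0} ∩ ⋂ i, {a | E i a}ᶜ) := by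
    ext a
    by_cases h : ∃ i, E i a
    · simp only [mem_preimage, mem_singleton_iff, pickIdx, dif_pos h, Nat.find_eq_iff h,
        mem_union, mem_inter_iff, mem_setOf_eq, mem_iInter, mem_compl_iff]
      constructor
      · rintro ⟨h1, h2⟩; exact Or.inl ⟨h1, fun i hi => h2 i hi⟩
      · rintro (⟨h1, h2⟩ | ⟨rfl, h2⟩)
        · exact ⟨h1, fun i hi => h2 i hi⟩
        · exact absurd h (by push_neg; exact h2)
    · push_neg at h
      simp only [mem_preimage, mem_singleton_iff, pickIdx, dif_neg (not_exists.2 h),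
        mem_union, mem_inter_iff, mem_setOf_eq, mem_iInter, mem_compl_iff]
      constructor
      · rintro rfl; exact Or.inr ⟨rfl, h⟩
      · rintro (⟨h1, _⟩ | ⟨h0, _⟩)
        · exact absurd h1 (h j)
        · exact h0.symm
  rw [hset]
  refine MeasurableSet.union (MeasurableSet.inter (hE j) ?_) (MeasurableSet.inter ?_ ?_)
  · exact MeasurableSet.iInter fun i => MeasurableSet.iInter fun _ => (hE i).compl
  · by_cases hj : j = 0 <;> simp [hj]
  · exact MeasurableSet.iInter fun i => (hE i).compl

section Sel

variable (X : Type*) [MetricSpace X] [SecondCountableTopology X] [Nonempty X]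

abbrev ESm := EffrosStar (X := X) inferInstance

def eseq : ℕ → X := TopologicalSpace.denseSeq X

variable {X}

def chainU (F : Set X) (k m : ℕ) : ℕ → Set X
  | 0 => if (F ∩ Metric.ball (eseq X k) ((1/2 : ℝ) ^ m)).Nonempty
         then Metric.ball (eseq X k) ((1/2 : ℝ) ^ m) else Set.univ
  | n + 1 =>
      chainU F k m n ∩
        Metric.ball (eseq X (pickIdx fun j =>
          (F ∩ (chainU F k m n ∩ Metric.ball (eseq X j) ((1/2 : ℝ) ^ (n+1)))).Nonempty))
          ((1/2 : ℝ) ^ (n + 1))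

def picks (F : Set X) (k m n : ℕ) : ℕ :=
  pickIdx fun j => (F ∩ (chainU F k m n ∩ Metric.ball (eseq X j) ((1/2 : ℝ) ^ (n+1)))).Nonempty

lemma chainU_succ (F : Set X) (k m n : ℕ) :
    chainU F k m (n+1) = chainU F k m n ∩
      Metric.ball (eseq X (picks F k m n)) ((1/2 : ℝ) ^ (n+1)) := rfl

def pseq (F : Set X) (k m n : ℕ) : X := eseq X (picks F k m n)

def sel (F : Set X) (k m : ℕ) : X := limUnder atTop (pseq F k m)

lemma exists_pick (F U : Set X) {r : ℝ} (hFU : (F ∩ U).Nonempty) (hr : 0 < r) :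
    ∃ j, (F ∩ (U ∩ Metric.ball (eseq X j) r)).Nonempty := by
  obtain ⟨y, hyF, hyU⟩ := hFU
  obtain ⟨j, hj⟩ := (denseRange_denseSeq X).exists_dist_lt y hr
  exact ⟨j, y, hyF, hyU, mem_ball.2 hj⟩

lemma chainU_inter_nonempty {F : Set X} (hF : F.Nonempty) (k m : ℕ) :
    ∀ n, (F ∩ chainU F k m n).Nonempty
  | 0 => by
      rw [chainU]
      split_ifs with h
      · exact h
      · simpa using hF
  | n + 1 => by
      rw [chainU_succ]
      have h := chainU_inter_nonempty hF k m n
      have hex := exists_pick F (chainU F k m n) h (by positivity : (0:ℝ) < (1/2)^(n+1))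
      have := pickIdx_spec hex
      rw [picks, ← Set.inter_assoc] at *
      exact (Set.inter_assoc _ _ _) ▸ this

lemma chainU_subset_ball (F : Set X) (k m n : ℕ) :
    chainU F k m (n+1) ⊆ Metric.ball (eseq X (picks F k m n)) ((1/2 : ℝ) ^ (n+1)) := by
  rw [chainU_succ]; exact Set.inter_subset_right

lemma chainU_anti (F : Set X) (k m : ℕ) : ∀ {a b : ℕ}, a ≤ b → chainU F k m b ⊆ chainU F k m a := by
  intro a b hab
  induction b with
  | zero => simp_all
  | succ n ih =>
      rcases Nat.lt_or_ge a (n+1) with h | h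
      · exact (Set.inter_subset_left.trans (ih (Nat.lt_succ_iff.1 h)) : _)
      · have : a = n + 1 := le_antisymm hab h
        subst this; rfl

lemma dist_pseq {F : Set X} (hF : F.Nonempty) (k m n : ℕ) :
    dist (pseq F k m n) (pseq F k m (n+1)) ≤ 1 * (1/2 : ℝ) ^ n := by
  obtain ⟨z, hzF, hz⟩ := chainU_inter_nonempty hF k m (n+2)
  have h1 : z ∈ Metric.ball (eseq X (picks F k m (n+1))) ((1/2 : ℝ) ^ (n+2)) :=
    chainU_subset_ball F k m (n+1) hz
  have h2 : z ∈ Metric.ball (eseq X (picks F k m n)) ((1/2 : ℝ) ^ (n+1)) :=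
    chainU_subset_ball F k m n (chainU_anti F k m (Nat.le_succ _) hz)
  rw [mem_ball] at h1 h2
  calc dist (pseq F k m n) (pseq F k m (n+1))
      ≤ dist (pseq F k m n) z + dist z (pseq F k m (n+1)) := dist_triangle _ _ _
    _ ≤ (1/2:ℝ)^(n+1) + (1/2:ℝ)^(n+2) := add_le_add (by rw [dist_comm]; exact h2.le) h1.le
    _ ≤ 1 * (1/2:ℝ)^n := by
        have h := pow_nonneg (by norm_num : (0:ℝ) ≤ 1/2) n
        have e1 : (1/2:ℝ)^(n+1) = (1/2)*(1/2)^n := by ring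
        have e2 : (1/2:ℝ)^(n+2) = (1/4)*(1/2)^n := by ring
        rw [e1, e2]; nlinarith

lemma cauchy_pseq {F : Set X} (hF : F.Nonempty) (k m : ℕ) : CauchySeq (pseq F k m) :=
  cauchySeq_of_le_geometric (1/2) 1 (by norm_num) (dist_pseq hF k m)

variable [CompleteSpace X]

lemma tendsto_pseq {F : Set X} (hF : F.Nonempty) (k m : ℕ) :
    Tendsto (pseq F k m) atTop (𝓝 (sel F k m)) :=
  (cauchy_pseq hF k m).tendsto_limUnder

lemma sel_mem {F : Set X} (hcl : IsClosed F) (hF : F.Nonempty) (k m : ℕ) :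
    sel F k m ∈ F ∧
      ((F ∩ Metric.ball (eseq X k) ((1/2:ℝ)^m)).Nonempty →
        dist (sel F k m) (eseq X k) ≤ (1/2:ℝ)^m) := by
  set z : ℕ → X := fun n => (chainU_inter_nonempty hF k m (n+1)).choose with hzdef
  have hz : ∀ n, z n ∈ F ∩ chainU F k m (n+1) :=
    fun n => (chainU_inter_nonempty hF k m (n+1)).choose_spec
  have hdz : ∀ n, dist (pseq F k m n) (z n) < (1/2:ℝ)^(n+1) := by
    intro n
    have := chainU_subset_ball F k m n (hz n).2
    rw [mem_ball, dist_comm] at this; exact this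
  have htz : Tendsto z atTop (𝓝 (sel F k m)) := by
    apply (tendsto_pseq hF k m).congr_dist
    apply squeeze_zero (fun n => dist_nonneg) (fun n => le_of_lt (hdz n))
    have : Tendsto (fun n : ℕ => (1/2:ℝ)^(n+1)) atTop (𝓝 0) := by
      have h := tendsto_pow_atTop_nhds_zero_of_lt_one (by norm_num : (0:ℝ) ≤ 1/2)
        (by norm_num : (1/2:ℝ) < 1)
      exact h.comp (tendsto_add_atTop_nat 1)
    exact this
  constructor
  · exact hcl.mem_of_tendsto htz (Eventually.of_forall fun n => (hz n).1)
  · intro hit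
    have hz0 : ∀ n, z n ∈ Metric.closedBall (eseq X k) ((1/2:ℝ)^m) := by
      intro n
      have h0 : z n ∈ chainU F k m 0 := chainU_anti F k m (Nat.zero_le _) (hz n).2
      rw [chainU, if_pos hit] at h0
      exact ball_subset_closedBall h0
    have := isClosed_closedBall.mem_of_tendsto htz (Eventually.of_forall hz0)
    rwa [mem_closedBall] at this

end Sel

section Meas

variable {X : Type*} [MetricSpace X] [SecondCountableTopology X] [Nonempty X]

lemma measurableSet_hits {O : Set X} (hO : IsOpen O) :
    MeasurableSet {F : ESm X | (F.1 ∩ O).Nonempty} :=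
  MeasurableSpace.measurableSet_generateFrom ⟨O, hO, rfl⟩

/-- Deterministic chain from a boolean flag and an index sequence. -/
def chainOf (k m : ℕ) (b : Bool) (v : ℕ → ℕ) : ℕ → Set X
  | 0 => if b then Metric.ball (eseq X k) ((1/2:ℝ)^m) else Set.univ
  | n + 1 => chainOf k m b v n ∩ Metric.ball (eseq X (v n)) ((1/2:ℝ)^(n+1))

lemma chainOf_isOpen (k m : ℕ) (b : Bool) (v : ℕ → ℕ) : ∀ n, IsOpen (chainOf (X := X) k m b v n)
  | 0 => by rw [chainOf]; split_ifs <;> [exact isOpen_ball; exact isOpen_univ]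
  | n + 1 => (chainOf_isOpen k m b v n).inter isOpen_ball

lemma chainOf_congr {k m : ℕ} {b : Bool} {v w : ℕ → ℕ} :
    ∀ {n}, (∀ i < n, v i = w i) → chainOf (X := X) k m b v n = chainOf k m b w n := by
  intro n
  induction n with
  | zero => intro _; rfl
  | succ n ih =>
      intro h
      rw [chainOf, chainOf, ih (fun i hi => h i (hi.trans (Nat.lt_succ_self n))),
        h n (Nat.lt_succ_self n)]

lemma chainU_eq_chainOf (F : Set X) (k m : ℕ) : ∀ n,
    chainU F k m n = chainOf k m
      (decide ((F ∩ Metric.ball (eseq X k) ((1/2:ℝ)^m)).Nonempty)) (fun i => picks F k m i) n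
  | 0 => by
      rw [chainU, chainOf]
      by_cases h : (F ∩ Metric.ball (eseq X k) ((1/2:ℝ)^m)).Nonempty <;> simp [h]
  | n + 1 => by
      rw [chainU_succ, chainOf, chainU_eq_chainOf F k m n]

/-- Extend a finite tuple by zeros. -/
def extFn {n : ℕ} (v : Fin n → ℕ) : ℕ → ℕ := fun i => if h : i < n then v ⟨i, h⟩ else 0

/-- The cylinder set recording the flag and the first `n` pick indices. -/
def Hset (k m n : ℕ) (b : Bool) (v : Fin n → ℕ) : Set (ESm X) :=
  {F | ((F.1 ∩ Metric.ball (eseq X k) ((1/2:ℝ)^m)).Nonempty ↔ b = true) ∧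
       ∀ i : Fin n, picks F.1 k m i = v i}

lemma Hset_chain {k m n : ℕ} {b : Bool} {v : Fin n → ℕ} {F : ESm X}
    (hF : F ∈ Hset k m n b v) {l : ℕ} (hl : l ≤ n) :
    chainU F.1 k m l = chainOf k m b (extFn v) l := by
  rw [chainU_eq_chainOf]
  have hb : decide ((F.1 ∩ Metric.ball (eseq X k) ((1/2:ℝ)^m)).Nonempty) = b := by
    rcases Bool.eq_false_or_eq_true b with hb | hb <;> subst hb
    · exact decide_eq_true (hF.1.mpr rfl)
    · exact decide_eq_false fun h => by simpa using hF.1.mp h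
  rw [hb]
  exact chainOf_congr fun i hi => by
    have hin : i < n := lt_of_lt_of_le hi hl
    rw [extFn, dif_pos hin]; exact hF.2 ⟨i, hin⟩

lemma measurable_Hset (k m : ℕ) : ∀ n (b : Bool) (v : Fin n → ℕ),
    MeasurableSet (Hset (X := X) k m n b v)
  | 0, b, v => by
      rcases Bool.eq_false_or_eq_true b with hb | hb <;> subst hb
      · convert measurableSet_hits (X := X) (O := Metric.ball (eseq X k) ((1/2:ℝ)^m))
          isOpen_ball using 1
        ext F
        constructor
        · rintro ⟨h1, -⟩
          exact h1.mpr rfl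
        · exact fun h => ⟨iff_of_true h rfl, fun i => i.elim0⟩
      · convert (measurableSet_hits (X := X) (O := Metric.ball (eseq X k) ((1/2:ℝ)^m))
          isOpen_ball).compl using 1
        ext F
        constructor
        · rintro ⟨h1, -⟩
          exact fun h => by simpa using h1.mp h
        · exact fun h => ⟨iff_of_false h (by simp), fun i => i.elim0⟩
  | n + 1, b, v => by
      have key : Hset (X := X) k m (n+1) b v =
          Hset k m n b (v ∘ Fin.castSucc) ∩
          {F : ESm X | pickIdx (fun j => (F.1 ∩ (chainOf k m b (extFn (v ∘ Fin.castSucc)) n ∩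
              Metric.ball (eseq X j) ((1/2:ℝ)^(n+1)))).Nonempty) = v (Fin.last n)} := by
        ext F
        constructor
        · intro hF
          have hF' : F ∈ Hset (X := X) k m n b (v ∘ Fin.castSucc) :=
            ⟨hF.1, fun i => hF.2 i.castSucc⟩
          refine ⟨hF', ?_⟩
          have hc := Hset_chain hF' (le_refl n)
          have hlast := hF.2 (Fin.last n)
          simp only [Fin.val_last] at hlast
          rw [picks, hc] at hlast
          exact hlast
        · rintro ⟨hF', hp⟩
          refine ⟨hF'.1, fun i => ?_⟩
          refine Fin.lastCases ?_ ?_ i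
          · simp only [Fin.val_last]
            rw [picks, Hset_chain hF' (le_refl n)]
            exact hp
          · intro j
            have := hF'.2 j
            simpa using this
      rw [key]
      refine (measurable_Hset k m n b _).inter ?_
      have hg : Measurable fun F : ESm X => pickIdx (fun j =>
          (F.1 ∩ (chainOf k m b (extFn (v ∘ Fin.castSucc)) n ∩
            Metric.ball (eseq X j) ((1/2:ℝ)^(n+1)))).Nonempty) := by
        refine measurable_pickIdx fun j => ?_
        exact measurableSet_hits (((chainOf_isOpen k m b _ n).inter isOpen_ball))
      exact hg (measurableSet_singleton _)

lemma measurable_picks (k m n : ℕ) : Measurable fun F : ESm X => picks F.1 k m n := by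
  apply measurable_to_countable'
  intro j
  have key : (fun F : ESm X => picks F.1 k m n) ⁻¹' {j} =
      ⋃ (b : Bool) (v : Fin n → ℕ),
        Hset k m n b v ∩ {F : ESm X | pickIdx (fun i => (F.1 ∩ (chainOf k m b (extFn v) n ∩
          Metric.ball (eseq X i) ((1/2:ℝ)^(n+1)))).Nonempty) = j} := by
    ext F
    simp only [mem_preimage, mem_singleton_iff, mem_iUnion, mem_inter_iff, mem_setOf_eq]
    constructor
    · intro hp
      refine ⟨decide ((F.1 ∩ Metric.ball (eseq X k) ((1/2:ℝ)^m)).Nonempty),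
        fun i => picks F.1 k m i, ⟨decide_eq_true_iff.symm, fun i => rfl⟩, ?_⟩
      rw [← Hset_chain (v := fun i : Fin n => picks F.1 k m i)
        ⟨decide_eq_true_iff.symm, fun i => rfl⟩ (le_refl n), ← picks]
      exact hp
    · rintro ⟨b, v, hF, hp⟩
      rw [picks, Hset_chain hF (le_refl n)]
      exact hp
  rw [key]
  refine MeasurableSet.iUnion fun b => MeasurableSet.iUnion fun v => ?_
  refine (measurable_Hset k m n b v).inter ?_
  have hg : Measurable fun F : ESm X => pickIdx (fun i =>
      (F.1 ∩ (chainOf k m b (extFn v) n ∩ Metric.ball (eseq X i) ((1/2:ℝ)^(n+1)))).Nonempty) :=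
    measurable_pickIdx fun i => measurableSet_hits ((chainOf_isOpen k m b _ n).inter isOpen_ball)
  exact hg (measurableSet_singleton _)

end Meas

section Sel2

variable {X : Type*} [MetricSpace X] [SecondCountableTopology X] [Nonempty X] [CompleteSpace X]

lemma esm_nonempty (F : ESm X) : F.1.Nonempty := F.2.2.nonempty

lemma sel_mem' (F : ESm X) (k m : ℕ) : sel F.1 k m ∈ F.1 :=
  (sel_mem F.2.1 (esm_nonempty F) k m).1

variable [MeasurableSpace X] [BorelSpace X]

lemma measurable_sel (k m : ℕ) : Measurable fun F : ESm X => sel F.1 k m := by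
  apply measurable_of_tendsto_metrizable (f := fun n (F : ESm X) => pseq F.1 k m n)
  · exact fun n => measurable_from_top.comp (measurable_picks k m n)
  · rw [tendsto_pi_nhds]
    exact fun F => tendsto_pseq (esm_nonempty F) k m

/-- The countable dense measurable selection family. -/
def dsel (F : ESm X) (i : ℕ) : X := sel F.1 i.unpair.1 i.unpair.2

lemma measurable_dsel (i : ℕ) : Measurable fun F : ESm X => dsel F i :=
  measurable_sel i.unpair.1 i.unpair.2

lemma dsel_mem (F : ESm X) (i : ℕ) : dsel F i ∈ F.1 := sel_mem' F _ _

lemma dsel_dense (F : ESm X) : F.1 ⊆ closure (Set.range (dsel F)) := by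
  intro x hx
  rw [Metric.mem_closure_iff]
  intro ε hε
  obtain ⟨m, hm⟩ := exists_pow_lt_of_lt_one (by positivity : (0:ℝ) < ε/2)
    (by norm_num : (1/2:ℝ) < 1)
  obtain ⟨k, hk⟩ := (denseRange_denseSeq X).exists_dist_lt x
    (by positivity : (0:ℝ) < (1/2:ℝ)^m)
  have hit : (F.1 ∩ Metric.ball (eseq X k) ((1/2:ℝ)^m)).Nonempty :=
    ⟨x, hx, mem_ball.2 hk⟩
  have hd := (sel_mem F.2.1 (esm_nonempty F) k m).2 hit
  refine ⟨dsel F (Nat.pair k m), ⟨Nat.pair k m, rfl⟩, ?_⟩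
  have : dsel F (Nat.pair k m) = sel F.1 k m := by rw [dsel, Nat.unpair_pair]
  rw [this]
  calc dist x (sel F.1 k m) ≤ dist x (eseq X k) + dist (eseq X k) (sel F.1 k m) :=
        dist_triangle _ _ _
    _ < (1/2:ℝ)^m + (1/2:ℝ)^m := add_lt_add_of_lt_of_le hk (by rw [dist_comm]; exact hd)
    _ < ε := by linarith
    
lemma range_dsel_infinite (F : ESm X) : (Set.range (dsel F)).Infinite := by
  intro hfin
  have hclosed : IsClosed (Set.range (dsel F)) := hfin.isClosed
  have : F.1 ⊆ Set.range (dsel F) := by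
    have := dsel_dense F
    rwa [hclosed.closure_eq] at this
  exact F.2.2 (hfin.subset this)

/-- Lists of indices of "fresh" selections. -/
def mAux (F : ESm X) : ℕ → List ℕ
  | 0 => [0]
  | n + 1 => (pickIdx fun i => ∀ x ∈ mAux F n, dsel F i ≠ dsel F x) :: mAux F n

def mIdx (F : ESm X) (n : ℕ) : ℕ := (mAux F n).headI

lemma exists_new (F : ESm X) (l : List ℕ) : ∃ i, ∀ x ∈ l, dsel F i ≠ dsel F x := by
  obtain ⟨a, ⟨i, rfl⟩, ha⟩ := (range_dsel_infinite F).exists_notMem_finset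
    (l.map (dsel F)).toFinset
  exact ⟨i, fun x hx h => ha (List.mem_toFinset.2 (List.mem_map.2 ⟨x, hx, h.symm⟩))⟩

lemma mIdx_zero (F : ESm X) : mIdx F 0 = 0 := rfl

lemma mIdx_succ (F : ESm X) (n : ℕ) :
    mIdx F (n+1) = pickIdx fun i => ∀ x ∈ mAux F n, dsel F i ≠ dsel F x := rfl

lemma mIdx_spec (F : ESm X) (n : ℕ) :
    ∀ x ∈ mAux F n, dsel F (mIdx F (n+1)) ≠ dsel F x := by
  rw [mIdx_succ]
  exact pickIdx_spec (exists_new F (mAux F n))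

lemma mem_mAux {F : ESm X} {n : ℕ} {x : ℕ} : x ∈ mAux F n ↔ ∃ j ≤ n, mIdx F j = x := by
  induction n with
  | zero =>
      simp only [mAux, List.mem_singleton]
      constructor
      · rintro rfl; exact ⟨0, le_refl 0, rfl⟩
      · rintro ⟨j, hj, rfl⟩; rw [Nat.le_zero] at hj; subst hj; rfl
  | succ n ih =>
      constructor
      · intro hx
        rcases List.mem_cons.1 hx with h | h
        · exact ⟨n+1, le_refl _, h.symm⟩
        · obtain ⟨j, hj, hjx⟩ := ih.1 h
          exact ⟨j, hj.trans (Nat.le_succ n), hjx⟩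
      · rintro ⟨j, hj, rfl⟩
        rcases Nat.lt_succ_iff_lt_or_eq.1 (Nat.lt_succ_of_le hj) with h | h
        · exact List.mem_cons.2 (Or.inr (ih.2 ⟨j, Nat.lt_succ_iff.1 h, rfl⟩))
        · subst h; exact List.mem_cons.2 (Or.inl rfl)

lemma mIdx_mem {F : ESm X} {j n : ℕ} (hj : j ≤ n) : mIdx F j ∈ mAux F n :=
  mem_mAux.2 ⟨j, hj, rfl⟩

lemma xi_ne {F : ESm X} {a b : ℕ} (h : a < b) :
    dsel F (mIdx F b) ≠ dsel F (mIdx F a) := by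
  obtain ⟨t, rfl⟩ := Nat.exists_eq_add_of_lt h
  exact mIdx_spec F (a + t) (mIdx F a) (mIdx_mem (Nat.le_add_right a t))

lemma xi_injective (F : ESm X) : Function.Injective fun n => dsel F (mIdx F n) := by
  intro a b hab
  by_contra hne
  rcases Nat.lt_or_ge a b with h | h
  · exact xi_ne h hab.symm
  · exact xi_ne (lt_of_le_of_ne h (Ne.symm hne)) hab

lemma mIdx_injective (F : ESm X) : Function.Injective (mIdx F) := fun a b hab =>
  xi_injective F (by simp only [hab])

lemma dsel_mem_range_xi (F : ESm X) (i : ℕ) :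
    dsel F i ∈ Set.range fun n => dsel F (mIdx F n) := by
  by_cases h : ∃ n, mIdx F n = i
  · obtain ⟨n, rfl⟩ := h
    exact ⟨n, rfl⟩
  · have hinf : (Set.range (mIdx F)).Infinite :=
      Set.infinite_range_of_injective (mIdx_injective F)
    obtain ⟨b, ⟨n, rfl⟩, hb⟩ := hinf.exists_gt i
    have hex : ∃ n, i < mIdx F n := ⟨n, hb⟩
    rcases hfind : Nat.find hex with _ | t
    · exfalso
      have := Nat.find_spec hex
      rw [hfind, mIdx_zero] at this
      omega
    have hspec : i < mIdx F (t+1) := by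
      have := Nat.find_spec hex
      rwa [hfind] at this
    have hP : ¬ (∀ x ∈ mAux F t, dsel F i ≠ dsel F x) := by
      intro hP
      have : mIdx F (t+1) ≤ i := by
        rw [mIdx_succ]
        exact pickIdx_le hP
      omega
    push_neg at hP
    obtain ⟨x, hx, hxe⟩ := hP
    obtain ⟨j, _, rfl⟩ := mem_mAux.1 hx
    exact ⟨j, hxe.symm⟩

end Sel2

section Meas2

variable {X : Type*} [MetricSpace X] [SecondCountableTopology X] [Nonempty X] [CompleteSpace X]
  [MeasurableSpace X] [BorelSpace X]

lemma measurableSet_dsel_eq (i c : ℕ) : MeasurableSet {F : ESm X | dsel F i = dsel F c} := by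
  have h : {F : ESm X | dsel F i = dsel F c} =
      (fun F => (dsel F i, dsel F c)) ⁻¹' Set.diagonal X := by
    ext F; simp [Set.diagonal, eq_comm]
  rw [h]
  exact ((measurable_dsel i).prodMk (measurable_dsel c)) isClosed_diagonal.measurableSet

def MSet (n : ℕ) (v : Fin n → ℕ) : Set (ESm X) := {F | ∀ j : Fin n, mIdx F j = v j}

lemma measurable_MSet : ∀ (n : ℕ) (v : Fin n → ℕ), MeasurableSet (MSet (X := X) n v)
  | 0, v => by
      have : MSet (X := X) 0 v = Set.univ := by
        ext F
        simp only [MSet, mem_setOf_eq, mem_univ, iff_true]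
        exact fun j => j.elim0
      rw [this]; exact MeasurableSet.univ
  | 1, v => by
      have : MSet (X := X) 1 v = if 0 = v 0 then Set.univ else ∅ := by
        split_ifs with h
        · ext F
          simp only [MSet, mem_setOf_eq, mem_univ, iff_true]
          intro j
          have : j = 0 := Subsingleton.elim j 0
          rw [this, ← h]
          rfl
        · ext F
          simp only [MSet, mem_setOf_eq, mem_empty_iff_false, iff_false]
          intro hF
          exact h ((mIdx_zero F).symm.trans (hF 0))
      rw [this]
      split_ifs <;> simp
  | (t + 2), v => by
      have key : MSet (X := X) (t+2) v = MSet (t+1) (v ∘ Fin.castSucc) ∩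
          {F : ESm X | pickIdx (fun i => ∀ j : Fin (t+1),
            dsel F i ≠ dsel F (v j.castSucc)) = v (Fin.last (t+1))} := by
        have hg : ∀ F : ESm X, F ∈ MSet (t+1) (v ∘ Fin.castSucc) →
            mIdx F (t+1) = pickIdx (fun i => ∀ j : Fin (t+1),
              dsel F i ≠ dsel F (v j.castSucc)) := by
          intro F hF
          rw [mIdx_succ]
          refine congrArg pickIdx (funext fun i => propext ?_)
          constructor
          · intro hall j
            have hmem : mIdx F j ∈ mAux F t := mIdx_mem (Nat.lt_succ_iff.1 j.isLt)
            have := hall (mIdx F j) hmem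
            rwa [hF j] at this
          · intro hall x hx
            obtain ⟨j, hj, rfl⟩ := mem_mAux.1 hx
            have := hall ⟨j, Nat.lt_succ_of_le hj⟩
            have heq : mIdx F j = v (Fin.castSucc ⟨j, Nat.lt_succ_of_le hj⟩) :=
              hF ⟨j, Nat.lt_succ_of_le hj⟩
            rw [heq]
            exact this
        ext F
        constructor
        · intro hF
          have hF' : F ∈ MSet (X := X) (t+1) (v ∘ Fin.castSucc) := fun j => hF j.castSucc
          refine ⟨hF', ?_⟩
          show pickIdx (fun i => ∀ j : Fin (t+1),
            dsel F i ≠ dsel F (v j.castSucc)) = v (Fin.last (t+1))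
          rw [← hg F hF']
          exact hF (Fin.last (t+1))
        · rintro ⟨hF', hp⟩
          intro j
          refine Fin.lastCases ?_ (fun j => hF' j) j
          have hfin : mIdx F (t+1) = v (Fin.last (t+1)) := (hg F hF').trans hp
          exact hfin
      rw [key]
      refine (measurable_MSet (t+1) _).inter ?_
      have hg : Measurable fun F : ESm X => pickIdx (fun i => ∀ j : Fin (t+1),
          dsel F i ≠ dsel F (v j.castSucc)) := by
        refine measurable_pickIdx fun i => ?_
        have : {F : ESm X | ∀ j : Fin (t+1), dsel F i ≠ dsel F (v j.castSucc)} =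
            ⋂ j : Fin (t+1), {F : ESm X | dsel F i = dsel F (v j.castSucc)}ᶜ := by
          ext F; simp
        rw [this]
        exact MeasurableSet.iInter fun j => (measurableSet_dsel_eq i _).compl
      exact hg (measurableSet_singleton _)

lemma measurable_mIdx (n : ℕ) : Measurable fun F : ESm X => mIdx F n := by
  apply measurable_to_countable'
  intro j
  have key : (fun F : ESm X => mIdx F n) ⁻¹' {j} =
      ⋃ (v : Fin (n+1) → ℕ) (_ : v (Fin.last n) = j), MSet (n+1) v := by
    ext F
    simp only [mem_preimage, mem_singleton_iff, mem_iUnion]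
    constructor
    · intro hj
      refine ⟨fun j' => mIdx F j', ?_, fun j' => rfl⟩
      simpa using hj
    · rintro ⟨v, hv, hF⟩
      have := hF (Fin.last n)
      rw [hv] at this
      simpa using this
  rw [key]
  exact MeasurableSet.iUnion fun v => MeasurableSet.iUnion fun _ => measurable_MSet (n+1) v

lemma measurable_xi (n : ℕ) : Measurable fun F : ESm X => dsel F (mIdx F n) := by
  intro s hs
  have key : (fun F : ESm X => dsel F (mIdx F n)) ⁻¹' s =
      ⋃ i : ℕ, ((fun F : ESm X => mIdx F n) ⁻¹' {i} ∩ (fun F : ESm X => dsel F i) ⁻¹' s) := by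
    ext F
    simp only [mem_preimage, mem_iUnion, mem_inter_iff, mem_preimage, mem_singleton_iff]
    constructor
    · intro h
      exact ⟨mIdx F n, rfl, h⟩
    · rintro ⟨i, hi, h⟩
      rwa [hi]
  rw [key]
  exact MeasurableSet.iUnion fun i =>
    ((measurable_mIdx n) (measurableSet_singleton i)).inter ((measurable_dsel i) hs)

theorem aux_main : ∃ ξ : ℕ → ESm X → X,
    (∀ n : ℕ, Measurable (ξ n)) ∧
    (∀ F : ESm X, Function.Injective fun n => ξ n F) ∧
    (∀ F : ESm X, Set.range (fun n => ξ n F) ⊆ F.1 ∧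
      F.1 ⊆ closure (Set.range fun n => ξ n F)) := by
  refine ⟨fun n F => dsel F (mIdx F n), measurable_xi, xi_injective, fun F => ⟨?_, ?_⟩⟩
  · rintro x ⟨n, rfl⟩
    exact dsel_mem F _
  · refine (dsel_dense F).trans (closure_mono ?_)
    rintro x ⟨i, rfl⟩
    exact dsel_mem_range_xi F i

end Meas2

theorem measurable_injective_selection
    {X : Type*} [MeasurableSpace X]
    (τ : TopologicalSpace X) (hτ : @PolishSpace X τ) (hB : @BorelSpace X τ _) :
    ∃ ξ : ℕ → EffrosStar τ → X,
      -- (1) measurability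
      (∀ n : ℕ, Measurable (ξ n)) ∧
      -- (2) injectivity
      (∀ F : EffrosStar τ, Function.Injective fun n => ξ n F) ∧
      -- (3) selectivity: `{ξ n F : n ∈ ℕ}` is a dense subset of `F`
      (∀ F : EffrosStar τ, Set.range (fun n => ξ n F) ⊆ F.1 ∧
        F.1 ⊆ @closure X τ (Set.range fun n => ξ n F)) := by
  rcases isEmpty_or_nonempty X with hX | hX
  · haveI : IsEmpty (EffrosStar τ) := ⟨fun F => hX.elim F.2.2.nonempty.some⟩
    refine ⟨fun _ F => F.2.2.nonempty.some, ?_, ?_, ?_⟩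
    · intro n s _
      have h : ((fun F : EffrosStar τ => F.2.2.nonempty.some) ⁻¹' s) = ∅ :=
        Set.eq_empty_of_isEmpty _
      rw [h]
      exact MeasurableSet.empty
    · exact fun F => isEmptyElim F
    · exact fun F => isEmptyElim F
  · obtain ⟨m, hm, hc⟩ := hτ.complete
    subst hm
    letI := m
    haveI : CompleteSpace X := hc
    haveI : SecondCountableTopology X := hτ.toSecondCountableTopology
    haveI : BorelSpace X := hB
    exact aux_main

end
end

section
/- Let (X,B) be a standard Borel space. For every Polish topology τ on X generating B there are mappings Ξ_A : F*_τ(X) → ℤ_{≥0} ∪ {∞} for A ∈ B, defined on the Effros space of infinite τ-closed subsets, such that: (1) Ξ_{A∪B} = Ξ_A + Ξ_B for every disjoint A,B ∈ B; (2) each Ξ_A is Effros-measurable and together the Ξ_A generate the Effros σ-algebra of F*_τ(X); (3) the identity Ξ_A(F) = #(A ∩ F) holds in each of the following cases: (i) A is τ-open; (ii) A ⊂ O for some τ-open O with #(F ∩ O) < ∞; (iii) A ∈ B arbitrary and F is τ-discrete. -/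
/-!
Statement 11 (Effros random variables): for every Polish topology `τ` generating the
Borel σ-algebra of a standard Borel space `(X, B)`, there are maps
`Ξ_A : F*_τ(X) → ℕ∞`, `A ∈ B`, which are finitely additive, Effros-measurable and
generate the Effros σ-algebra, and which agree with the counting function
`F ↦ #(A ∩ F)` for `A` open, for `A` contained in an open set meeting `F` finitely,
and for arbitrary Borel `A` when `F` is `τ`-discrete.
-/

open MeasureTheory

noncomputable section

namespace EffrosRVAux

open Set Metric Filter Topology TopologicalSpace

lemma measurableSet_meets {X : Type*} [t : TopologicalSpace X] {O : Set X} (hO : IsOpen O) :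
    MeasurableSet {F : EffrosStar t | (F.1 ∩ O).Nonempty} :=
  MeasurableSpace.measurableSet_generateFrom ⟨O, hO, rfl⟩

lemma measurable_sInf_nat {α : Type*} [MeasurableSpace α] {P : ℕ → α → Prop}
    (hP : ∀ k, MeasurableSet {a | P k a}) :
    Measurable fun a => sInf {k | P k a} := by
  apply measurable_to_countable'
  intro m
  rcases Nat.eq_zero_or_pos m with rfl | hm
  · have h : (fun a => sInf {k | P k a}) ⁻¹' {0} = {a | P 0 a} ∪ ⋂ i, {a | P i a}ᶜ := by
      ext a
      simp only [mem_preimage, mem_singleton_iff, mem_union, mem_iInter, mem_compl_iff,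
        mem_setOf_eq]
      constructor
      · intro h
        by_cases hne : {k | P k a}.Nonempty
        · left; have := Nat.sInf_mem hne; rwa [h] at this
        · right; intro i hi; exact hne ⟨i, hi⟩
      · rintro (h | h)
        · exact Nat.sInf_eq_zero.2 (Or.inl h)
        · exact Nat.sInf_eq_zero.2 (Or.inr (eq_empty_iff_forall_notMem.2 h))
    rw [h]
    exact (hP 0).union (MeasurableSet.iInter fun i => (hP i).compl)
  · have h : (fun a => sInf {k | P k a}) ⁻¹' {m}
        = {a | P m a} ∩ ⋂ (i : ℕ), ⋂ (_ : i < m), {a | P i a}ᶜ := by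
      ext a
      simp only [mem_preimage, mem_singleton_iff, mem_inter_iff, mem_iInter, mem_compl_iff,
        mem_setOf_eq]
      constructor
      · intro h
        have hne : {k | P k a}.Nonempty := by
          by_contra hne
          rw [not_nonempty_iff_eq_empty] at hne
          rw [hne, Nat.sInf_empty] at h
          omega
        constructor
        · have := Nat.sInf_mem hne; rwa [h] at this
        · intro i hi; exact Nat.notMem_of_lt_sInf (h ▸ hi)
      · rintro ⟨h1, h2⟩
        refine le_antisymm (Nat.sInf_le h1) ?_
        by_contra hc
        push_neg at hc
        have hmem : sInf {k | P k a} ∈ {k | P k a} := Nat.sInf_mem ⟨m, h1⟩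
        exact h2 _ hc hmem
    rw [h]
    exact (hP m).inter (MeasurableSet.iInter fun i => MeasurableSet.iInter fun _ => (hP i).compl)

lemma measurable_iSup_enat {α : Type*} [MeasurableSpace α] {f : ℕ → α → ℕ∞}
    (hf : ∀ n, Measurable (f n)) : Measurable fun a => ⨆ n, f n a := by
  have hIic : ∀ M : ℕ∞, MeasurableSet {a | (⨆ n, f n a) ≤ M} := by
    intro M
    have h : {a | (⨆ n, f n a) ≤ M} = ⋂ n, {a | f n a ≤ M} := by
      ext a; simp [iSup_le_iff]
    rw [h]
    exact MeasurableSet.iInter fun n => hf n (MeasurableSet.of_discrete (s := Iic M))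
  apply measurable_to_countable'
  intro m
  have h : (fun a => ⨆ n, f n a) ⁻¹' {m}
      = {a | (⨆ n, f n a) ≤ m} ∩ ⋂ (k : ℕ∞), ⋂ (_ : k < m), {a | (⨆ n, f n a) ≤ k}ᶜ := by
    ext a
    simp only [mem_preimage, mem_singleton_iff, mem_inter_iff, mem_iInter, mem_compl_iff,
      mem_setOf_eq]
    constructor
    · intro h
      refine ⟨le_of_eq h, fun k hk hle => ?_⟩
      rw [h] at hle
      exact absurd (lt_of_le_of_lt hle hk) (lt_irrefl m)
    · rintro ⟨h1, h2⟩
      refine le_antisymm h1 ?_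
      by_contra hc
      push_neg at hc
      exact h2 _ hc le_rfl
  rw [h]
  exact (hIic m).inter
    (MeasurableSet.iInter fun k => MeasurableSet.iInter fun _ => (hIic k).compl)

lemma encard_iUnion_monotone {α : Type*} {s : ℕ → Set α} (hs : Monotone s) :
    (⋃ n, s n).encard = ⨆ n, (s n).encard := by
  have bound : ∀ (u : Set α), u.Finite → u ⊆ ⋃ n, s n → ∃ N, u ⊆ s N := by
    intro u hu husub
    obtain ⟨I, hIfin, hI⟩ := Set.finite_subset_iUnion hu husub
    obtain ⟨N, hN⟩ := hIfin.bddAbove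
    refine ⟨N, hI.trans ?_⟩
    exact iUnion₂_subset fun i hi => hs (hN hi)
  refine le_antisymm ?_ (iSup_le fun n => Set.encard_mono (subset_iUnion s n))
  by_cases h : (⋃ n, s n).Finite
  · obtain ⟨N, hN⟩ := bound _ h subset_rfl
    exact le_trans (Set.encard_mono hN) (le_iSup (fun n => (s n).encard) N)
  · rw [Set.Infinite.encard_eq h]
    have key : ∀ m : ℕ, (m : ℕ∞) ≤ ⨆ n, (s n).encard := by
      intro m
      obtain ⟨u, husub, hufin, hucard⟩ := (Set.Infinite.exists_subset_ncard_eq h m)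
      obtain ⟨N, hN⟩ := bound u hufin husub
      calc (m : ℕ∞) = u.encard := by rw [← hucard, hufin.cast_ncard_eq]
        _ ≤ (s N).encard := Set.encard_mono hN
        _ ≤ ⨆ n, (s n).encard := le_iSup (fun n => (s n).encard) N
    have htop : (⨆ n, (s n).encard) = ⊤ := by
      set S := ⨆ n, (s n).encard with hS
      by_contra hne
      lift S to ℕ using hne with k hk
      have h1 := key (k + 1)
      have h2 : k + 1 ≤ k := by exact_mod_cast h1
      omega
    rw [htop]


lemma exists_selectors {X : Type*} [MeasurableSpace X] [t : TopologicalSpace X]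
    [PolishSpace X] [BorelSpace X] [Nonempty X] :
    ∃ d : ℕ → EffrosStar t → X,
      (∀ n (F : EffrosStar t), d n F ∈ F.1) ∧ (∀ n, Measurable (d n)) ∧
      (∀ (F : EffrosStar t) (O : Set X), IsOpen O → (F.1 ∩ O).Nonempty →
        ∃ n, d n F ∈ O) := by
  classical
  letI := upgradeIsCompletelyMetrizable X
  -- enumerate a countable basis
  obtain ⟨x0⟩ := ‹Nonempty X›
  obtain ⟨U0, hU0b, -, -⟩ :=
    (isBasis_countableBasis X).exists_subset_of_mem_open (mem_univ x0) isOpen_univ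
  obtain ⟨U, hU⟩ := (countable_countableBasis X).exists_eq_range ⟨U0, hU0b⟩
  have hUopen : ∀ n, IsOpen (U n) := fun n =>
    isOpen_of_mem_countableBasis (hU ▸ mem_range_self n)
  -- dense sequence
  set q : ℕ → X := denseSeq X with hqdef
  have hq : DenseRange q := denseRange_denseSeq X
  -- target sets
  set T : ℕ → EffrosStar t → Set X :=
    fun n F => if (F.1 ∩ U n).Nonempty then closure (F.1 ∩ U n) else F.1 with hT
  have hTclosed : ∀ n F, IsClosed (T n F) := by
    intro n F
    simp only [hT]
    split
    · exact isClosed_closure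
    · exact F.2.1
  have hTsub : ∀ n F, T n F ⊆ F.1 := by
    intro n F
    simp only [hT]
    split
    · exact F.2.1.closure_subset_iff.2 inter_subset_left
    · exact subset_rfl
  have hTne : ∀ n F, (T n F).Nonempty := by
    intro n F
    simp only [hT]
    split
    · exact Set.Nonempty.closure ‹_›
    · exact F.2.2.nonempty
  have hclos : ∀ (s O : Set X), IsOpen O → ((closure s ∩ O).Nonempty ↔ (s ∩ O).Nonempty) := by
    intro s O hO
    constructor
    · rintro ⟨x, hxc, hxO⟩
      obtain ⟨y, hy1, hy2⟩ := _root_.mem_closure_iff.1 hxc O hO hxO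
      exact ⟨y, hy2, hy1⟩
    · rintro ⟨x, hxs, hxO⟩
      exact ⟨x, subset_closure hxs, hxO⟩
  have hTmeas : ∀ n (O : Set X), IsOpen O →
      MeasurableSet {F : EffrosStar t | (T n F ∩ O).Nonempty} := by
    intro n O hO
    have heq : {F : EffrosStar t | (T n F ∩ O).Nonempty}
        = {F : EffrosStar t | (F.1 ∩ (U n ∩ O)).Nonempty}
          ∪ ({F : EffrosStar t | (F.1 ∩ U n).Nonempty}ᶜ
              ∩ {F : EffrosStar t | (F.1 ∩ O).Nonempty}) := by
      ext F
      by_cases h : (F.1 ∩ U n).Nonempty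
      · have hT' : T n F = closure (F.1 ∩ U n) := by simp only [hT]; rw [if_pos h]
        simp only [mem_setOf_eq, mem_union, mem_inter_iff, mem_compl_iff, hT']
        rw [hclos _ _ hO, inter_assoc]
        constructor
        · exact Or.inl
        · rintro (h' | ⟨hn', -⟩)
          · exact h'
          · exact absurd h hn'
      · have hT' : T n F = F.1 := by simp only [hT]; rw [if_neg h]
        simp only [mem_setOf_eq, mem_union, mem_inter_iff, mem_compl_iff, hT']
        constructor
        · exact fun h' => Or.inr ⟨h, h'⟩
        · rintro (⟨x, hx1, hx2, hx3⟩ | ⟨-, h'⟩)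
          · exact absurd ⟨x, hx1, hx2⟩ h
          · exact h'
    rw [heq]
    exact (measurableSet_meets ((hUopen n).inter hO)).union
      (((measurableSet_meets (hUopen n)).compl).inter (measurableSet_meets hO))
  -- the recursive approximation indices
  set r : ℕ → ℕ → EffrosStar t → ℕ := fun n j F =>
    Nat.rec (sInf {k | (T n F ∩ ball (q k) 1).Nonempty})
      (fun j ih => sInf {k | (T n F ∩ ball (q ih) ((1/2 : ℝ)^j)
        ∩ ball (q k) ((1/2 : ℝ)^(j+1))).Nonempty}) j
    with hr
  have hinv : ∀ n (F : EffrosStar t) j,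
      (T n F ∩ ball (q (r n j F)) ((1/2 : ℝ)^j)).Nonempty := by
    intro n F j
    induction j with
    | zero =>
      obtain ⟨x, hx⟩ := hTne n F
      obtain ⟨k, hk⟩ := hq.exists_dist_lt x one_pos
      have hmem : k ∈ {k | (T n F ∩ ball (q k) 1).Nonempty} := ⟨x, hx, by rwa [mem_ball]⟩
      have h := Nat.sInf_mem (⟨k, hmem⟩ : {k | (T n F ∩ ball (q k) 1).Nonempty}.Nonempty)
      rw [pow_zero]
      exact h
    | succ j ih =>
      obtain ⟨x, hxT, hxB⟩ := ih
      have hpos : (0 : ℝ) < (1/2 : ℝ)^(j+1) := by positivity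
      obtain ⟨k, hk⟩ := hq.exists_dist_lt x hpos
      have hmem : k ∈ {k | (T n F ∩ ball (q (r n j F)) ((1/2 : ℝ)^j)
          ∩ ball (q k) ((1/2 : ℝ)^(j+1))).Nonempty} := ⟨x, ⟨hxT, hxB⟩, by rwa [mem_ball]⟩
      have h := Nat.sInf_mem (⟨k, hmem⟩ : {k | (T n F ∩ ball (q (r n j F)) ((1/2 : ℝ)^j)
          ∩ ball (q k) ((1/2 : ℝ)^(j+1))).Nonempty}.Nonempty)
      exact ⟨h.choose, h.choose_spec.1.1, h.choose_spec.2⟩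
  have hstep : ∀ n (F : EffrosStar t) j,
      (T n F ∩ ball (q (r n j F)) ((1/2 : ℝ)^j)
        ∩ ball (q (r n (j+1) F)) ((1/2 : ℝ)^(j+1))).Nonempty := by
    intro n F j
    obtain ⟨x, hxT, hxB⟩ := hinv n F j
    have hpos : (0 : ℝ) < (1/2 : ℝ)^(j+1) := by positivity
    obtain ⟨k, hk⟩ := hq.exists_dist_lt x hpos
    have hmem : k ∈ {k | (T n F ∩ ball (q (r n j F)) ((1/2 : ℝ)^j)
        ∩ ball (q k) ((1/2 : ℝ)^(j+1))).Nonempty} := ⟨x, ⟨hxT, hxB⟩, by rwa [mem_ball]⟩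
    have h := Nat.sInf_mem (⟨k, hmem⟩ : {k | (T n F ∩ ball (q (r n j F)) ((1/2 : ℝ)^j)
        ∩ ball (q k) ((1/2 : ℝ)^(j+1))).Nonempty}.Nonempty)
    exact h
  have hdist : ∀ n (F : EffrosStar t) j,
      dist (q (r n j F)) (q (r n (j+1) F)) ≤ 2 * (1/2 : ℝ)^j := by
    intro n F j
    obtain ⟨x, ⟨-, hx1⟩, hx2⟩ := hstep n F j
    rw [mem_ball] at hx1 hx2
    have hp : (0 : ℝ) < (1/2 : ℝ)^j := by positivity
    have htri := dist_triangle (q (r n j F)) x (q (r n (j+1) F))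
    rw [dist_comm (q (r n j F)) x] at htri
    have hps : ((1/2 : ℝ))^(j+1) = (1/2 : ℝ)^j * (1/2) := pow_succ _ _
    nlinarith
  have hcauchy : ∀ n (F : EffrosStar t), CauchySeq (fun j => q (r n j F)) := fun n F =>
    cauchySeq_of_le_geometric (1/2) 2 (by norm_num) (fun j => hdist n F j)
  set d : ℕ → EffrosStar t → X := fun n F => limUnder atTop (fun j => q (r n j F)) with hd
  have htend : ∀ n F, Tendsto (fun j => q (r n j F)) atTop (𝓝 (d n F)) := fun n F =>
    (hcauchy n F).tendsto_limUnder
  have hdT : ∀ n F, d n F ∈ T n F := by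
    intro n F
    have hy : ∀ j, ∃ y, y ∈ T n F ∧ dist y (q (r n j F)) < (1/2 : ℝ)^j := by
      intro j
      obtain ⟨y, hyT, hyB⟩ := hinv n F j
      exact ⟨y, hyT, mem_ball.1 hyB⟩
    choose y hyT hyB using hy
    have hyt : Tendsto y atTop (𝓝 (d n F)) := by
      rw [tendsto_iff_dist_tendsto_zero]
      have hg : Tendsto (fun j => (1/2 : ℝ)^j + dist (q (r n j F)) (d n F)) atTop (𝓝 0) := by
        have h1 : Tendsto (fun j : ℕ => ((1/2 : ℝ))^j) atTop (𝓝 0) :=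
          tendsto_pow_atTop_nhds_zero_of_lt_one (by norm_num) (by norm_num)
        have h2 : Tendsto (fun j => dist (q (r n j F)) (d n F)) atTop (𝓝 0) :=
          tendsto_iff_dist_tendsto_zero.1 (htend n F)
        simpa using h1.add h2
      refine tendsto_of_tendsto_of_tendsto_of_le_of_le tendsto_const_nhds hg
        (fun j => dist_nonneg) (fun j => ?_)
      calc dist (y j) (d n F) ≤ dist (y j) (q (r n j F)) + dist (q (r n j F)) (d n F) :=
            dist_triangle _ _ _
        _ ≤ (1/2 : ℝ)^j + dist (q (r n j F)) (d n F) := by linarith [hyB j]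
    exact (hTclosed n F).mem_of_tendsto hyt (Eventually.of_forall fun j => hyT j)
  have hrmeas : ∀ n j, Measurable (fun F : EffrosStar t => r n j F) := by
    intro n j
    induction j with
    | zero =>
      exact measurable_sInf_nat (fun k => hTmeas n _ isOpen_ball)
    | succ j ih =>
      apply measurable_to_countable'
      intro m
      have heq : (fun F : EffrosStar t => r n (j+1) F) ⁻¹' {m} =
          ⋃ p : ℕ, ((fun F : EffrosStar t => r n j F) ⁻¹' {p}) ∩
            ((fun F : EffrosStar t => sInf {k | (T n F ∩ ball (q p) ((1/2 : ℝ)^j)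
              ∩ ball (q k) ((1/2 : ℝ)^(j+1))).Nonempty}) ⁻¹' {m}) := by
        ext F
        simp only [mem_preimage, mem_singleton_iff, mem_iUnion, mem_inter_iff]
        constructor
        · intro h
          exact ⟨r n j F, rfl, h⟩
        · rintro ⟨p, rfl, h⟩
          exact h
      rw [heq]
      refine MeasurableSet.iUnion fun p => (ih (measurableSet_singleton p)).inter ?_
      refine (measurable_sInf_nat (fun k => ?_)) (measurableSet_singleton m)
      have hh := hTmeas n (ball (q p) ((1/2 : ℝ)^j) ∩ ball (q k) ((1/2 : ℝ)^(j+1)))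
        (isOpen_ball.inter isOpen_ball)
      simpa [inter_assoc] using hh
  have hdmeas : ∀ n, Measurable (d n) := by
    intro n
    apply measurable_of_tendsto_metrizable (f := fun j (F : EffrosStar t) => q (r n j F))
    · exact fun j => measurable_from_top.comp (hrmeas n j)
    · rw [tendsto_pi_nhds]
      exact fun F => htend n F
  refine ⟨d, fun n F => hTsub n F (hdT n F), hdmeas, ?_⟩
  rintro F O hO ⟨x, hxF, hxO⟩
  obtain ⟨ε, hε, hball⟩ := Metric.isOpen_iff.1 hO x hxO
  have hx2 : x ∈ ball x (ε/2) := mem_ball_self (by linarith)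
  obtain ⟨V, hVb, hxV, hVsub⟩ :=
    (isBasis_countableBasis X).exists_subset_of_mem_open hx2 isOpen_ball
  obtain ⟨n, hn⟩ : ∃ n, U n = V := by
    rw [hU] at hVb
    exact hVb
  refine ⟨n, ?_⟩
  have hne : (F.1 ∩ U n).Nonempty := ⟨x, hxF, hn ▸ hxV⟩
  have hdn : d n F ∈ closure (F.1 ∩ U n) := by
    have h := hdT n F
    simp only [hT, if_pos hne] at h
    exact h
  have hsub2 : closure (F.1 ∩ U n) ⊆ closure (ball x (ε/2)) := by
    apply closure_mono
    rw [hn]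
    exact inter_subset_right.trans hVsub
  have hd2 : d n F ∈ closedBall x (ε/2) := closure_ball_subset_closedBall (hsub2 hdn)
  apply hball
  rw [mem_ball]
  have := mem_closedBall.1 hd2
  linarith


end EffrosRVAux


theorem effros_random_variables
    {X : Type*} [MeasurableSpace X]
    (τ : TopologicalSpace X) (hτ : @PolishSpace X τ) (hB : @BorelSpace X τ _) :
    ∃ Ξ : Set X → EffrosStar τ → ℕ∞,
      -- (1) finite additivity on disjoint Borel sets
      (∀ A B : Set X, MeasurableSet A → MeasurableSet B → Disjoint A B →
        Ξ (A ∪ B) = Ξ A + Ξ B) ∧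
      -- (2) each `Ξ_A` is Effros-measurable, and together they generate the
      -- Effros σ-algebra of `F*_τ(X)`
      (∀ A : Set X, MeasurableSet A → Measurable (Ξ A)) ∧
      ((⨆ (A : Set X) (_ : MeasurableSet A),
          MeasurableSpace.comap (Ξ A) inferInstance) =
        (inferInstance : MeasurableSpace (EffrosStar τ))) ∧
      -- (3)(i) `Ξ_A(F) = #(A ∩ F)` for `A` open
      (∀ O : Set X, @IsOpen X τ O → ∀ F : EffrosStar τ, Ξ O F = (O ∩ F.1).encard) ∧
      -- (3)(ii) `Ξ_A(F) = #(A ∩ F)` when `A ⊆ O` for some open `O` with `F ∩ O` finite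
      (∀ (A O : Set X) (F : EffrosStar τ), MeasurableSet A → @IsOpen X τ O → A ⊆ O →
        (F.1 ∩ O).Finite → Ξ A F = (A ∩ F.1).encard) ∧
      -- (3)(iii) `Ξ_A(F) = #(A ∩ F)` for all Borel `A` when `F` is `τ`-discrete
      (∀ (A : Set X) (F : EffrosStar τ), MeasurableSet A → IsTauDiscrete τ F.1 →
        Ξ A F = (A ∩ F.1).encard) := by
  classical
  letI := τ
  haveI := hτ
  haveI := hB
  rcases isEmpty_or_nonempty X with hX | hX
  · haveI : IsEmpty (EffrosStar τ) := ⟨fun F => hX.false F.2.2.nonempty.choose⟩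
    refine ⟨fun _ _ => 0, ?_, ?_, ?_, ?_, ?_, ?_⟩
    · intro A B _ _ _
      funext F
      exact isEmptyElim F
    · intro A _
      exact measurable_of_empty _
    · refine MeasurableSpace.ext fun s => ?_
      have hs : s = ∅ := Set.eq_empty_of_isEmpty s
      subst hs
      simp only [MeasurableSet.empty]
    · intro O _ F
      exact isEmptyElim F
    · intro A O F _ _ _ _
      exact isEmptyElim F
    · intro A F _ _
      exact isEmptyElim F
  · obtain ⟨d, hd1, hd2, hd3⟩ := EffrosRVAux.exists_selectors (X := X)
    set D : EffrosStar τ → Set X := fun F => Set.range fun n => d n F with hD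
    set Ξ : Set X → EffrosStar τ → ℕ∞ := fun A F => (A ∩ D F).encard with hΞ
    have hDsub : ∀ F : EffrosStar τ, D F ⊆ F.1 := by
      rintro F x ⟨n, rfl⟩
      exact hd1 n F
    have hDmeet : ∀ (F : EffrosStar τ) (O : Set X), IsOpen O → (F.1 ∩ O).Nonempty →
        (O ∩ D F).Nonempty := by
      intro F O hO h
      obtain ⟨n, hn⟩ := hd3 F O hO h
      exact ⟨d n F, hn, ⟨n, rfl⟩⟩
    have hfincase : ∀ (F : EffrosStar τ) (O : Set X), IsOpen O → (F.1 ∩ O).Finite →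
        O ∩ D F = O ∩ F.1 := by
      intro F O hO hfin
      apply Set.Subset.antisymm
      · exact fun x hx => ⟨hx.1, hDsub F hx.2⟩
      · rintro y ⟨hyO, hyF⟩
        have hfin' : ((O ∩ F.1) \ {y}).Finite :=
          hfin.subset (fun z hz => ⟨hz.1.2, hz.1.1⟩)
        have hO' : IsOpen (O \ ((O ∩ F.1) \ {y})) := hO.sdiff hfin'.isClosed
        have hne : (F.1 ∩ (O \ ((O ∩ F.1) \ {y}))).Nonempty :=
          ⟨y, hyF, hyO, fun hy' => hy'.2 rfl⟩
        obtain ⟨n, hn⟩ := hd3 F _ hO' hne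
        have hnF : d n F ∈ F.1 := hd1 n F
        have heqy : d n F = y := by
          by_contra hne'
          exact hn.2 ⟨⟨hn.1, hnF⟩, hne'⟩
        exact ⟨hyO, ⟨n, heqy⟩⟩
    have hopen : ∀ (F : EffrosStar τ) (O : Set X), IsOpen O →
        (O ∩ D F).encard = (O ∩ F.1).encard := by
      intro F O hO
      by_cases h : (F.1 ∩ O).Finite
      · rw [hfincase F O hO h]
      · have h1 : (O ∩ F.1).Infinite := by
          rwa [Set.inter_comm] at h
        have h2 : (O ∩ D F).Infinite := by
          intro hf
          have hO' : IsOpen (O \ (O ∩ D F)) := hO.sdiff hf.isClosed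
          have hne : (F.1 ∩ (O \ (O ∩ D F))).Nonempty := by
            have hinf : ((O ∩ F.1) \ (O ∩ D F)).Infinite := h1.diff hf
            obtain ⟨z, hz⟩ := hinf.nonempty
            exact ⟨z, hz.1.2, hz.1.1, hz.2⟩
          obtain ⟨n, hn⟩ := hd3 F _ hO' hne
          exact hn.2 ⟨hn.1, ⟨n, rfl⟩⟩
        rw [h1.encard_eq, h2.encard_eq]
    set E : ℕ → EffrosStar τ → Set X := fun n F => (fun i => d i F) '' (Set.Iio n) with hE
    have hEmono : ∀ F : EffrosStar τ, Monotone fun n => E n F := fun F a b hab =>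
      Set.image_mono (Set.Iio_subset_Iio hab)
    have hEunion : ∀ (A : Set X) (F : EffrosStar τ), A ∩ D F = ⋃ n, A ∩ E n F := by
      intro A F
      rw [← Set.inter_iUnion]
      congr 1
      ext x
      simp only [hD, hE, Set.mem_range, Set.mem_iUnion, Set.mem_image, Set.mem_Iio]
      constructor
      · rintro ⟨n, rfl⟩
        exact ⟨n + 1, n, Nat.lt_succ_self n, rfl⟩
      · rintro ⟨m, i, -, rfl⟩
        exact ⟨i, rfl⟩
    have hXi : ∀ (A : Set X) (F : EffrosStar τ), Ξ A F = ⨆ n, (A ∩ E n F).encard := by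
      intro A F
      show (A ∩ D F).encard = _
      rw [hEunion A F]
      exact EffrosRVAux.encard_iUnion_monotone
        (fun a b hab => Set.inter_subset_inter Set.Subset.rfl (hEmono F hab))
    have hEmeas : ∀ (A : Set X), MeasurableSet A → ∀ n : ℕ,
        Measurable fun F : EffrosStar τ => (A ∩ E n F).encard := by
      intro A hA n
      induction n with
      | zero =>
        have hE0 : (fun F : EffrosStar τ => (A ∩ E 0 F).encard) = fun _ => 0 := by
          funext F
          have h0 : E 0 F = ∅ := by
            simp only [hE]
            apply Set.eq_empty_iff_forall_notMem.2
            rintro x ⟨i, hi, -⟩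
            exact absurd (Set.mem_Iio.1 hi) (Nat.not_lt_zero i)
          rw [h0, Set.inter_empty, Set.encard_empty]
        rw [hE0]
        exact measurable_const
      | succ n ih =>
        have hstepeq : ∀ F : EffrosStar τ, E (n+1) F = insert (d n F) (E n F) := by
          intro F
          simp only [hE]
          have hio : Set.Iio (n+1) = insert n (Set.Iio n) := by
            ext i
            simp only [Set.mem_Iio, Set.mem_insert_iff]
            omega
          rw [hio, Set.image_insert_eq]
        have key : ∀ F : EffrosStar τ,
            (A ∩ E (n+1) F).encard =
              if d n F ∈ A ∧ d n F ∉ E n F then (A ∩ E n F).encard + 1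
              else (A ∩ E n F).encard := by
          intro F
          rw [hstepeq F, Set.inter_comm A (insert (d n F) (E n F))]
          by_cases h1 : d n F ∈ A
          · rw [Set.insert_inter_of_mem h1]
            by_cases h2 : d n F ∈ E n F
            · rw [Set.insert_eq_self.2 (Set.mem_inter h2 h1), if_neg (fun hc => hc.2 h2),
                Set.inter_comm (E n F) A]
            · rw [Set.encard_insert_of_notMem (fun hc => h2 hc.1), if_pos ⟨h1, h2⟩,
                Set.inter_comm (E n F) A]
          · rw [Set.insert_inter_of_notMem h1, if_neg (fun hc => h1 hc.1),
              Set.inter_comm (E n F) A]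
        have hcond : MeasurableSet {F : EffrosStar τ | d n F ∈ A ∧ d n F ∉ E n F} := by
          have hc1 : MeasurableSet {F : EffrosStar τ | d n F ∈ A} := hd2 n hA
          have hc2 : MeasurableSet {F : EffrosStar τ | d n F ∈ E n F} := by
            have hset : {F : EffrosStar τ | d n F ∈ E n F}
                = ⋃ (i : ℕ), ⋃ (_ : i < n), {F : EffrosStar τ | d i F = d n F} := by
              ext F
              simp only [hE, Set.mem_setOf_eq, Set.mem_image, Set.mem_Iio, Set.mem_iUnion]
              constructor
              · rintro ⟨i, hi, hieq⟩
                exact ⟨i, hi, hieq⟩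
              · rintro ⟨i, hi, hieq⟩
                exact ⟨i, hi, hieq⟩
            rw [hset]
            refine MeasurableSet.iUnion fun i => MeasurableSet.iUnion fun _ => ?_
            exact ((hd2 i).prodMk (hd2 n)) isClosed_diagonal.measurableSet
          exact hc1.inter hc2.compl
        have heq2 : (fun F : EffrosStar τ => (A ∩ E (n+1) F).encard)
            = fun F => if d n F ∈ A ∧ d n F ∉ E n F then (A ∩ E n F).encard + 1
                else (A ∩ E n F).encard := funext key
        rw [heq2]
        exact Measurable.ite hcond ((measurable_from_top (f := fun x : ℕ∞ => x + 1)).comp ih) ih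
    have hXimeas : ∀ A : Set X, MeasurableSet A → Measurable (Ξ A) := by
      intro A hA
      have hXieq : Ξ A = fun F => ⨆ n, (A ∩ E n F).encard := funext fun F => hXi A F
      rw [hXieq]
      exact EffrosRVAux.measurable_iSup_enat (hEmeas A hA)
    refine ⟨Ξ, ?_, hXimeas, ?_, ?_, ?_, ?_⟩
    · intro A B _ _ hAB
      funext F
      show ((A ∪ B) ∩ D F).encard = (A ∩ D F).encard + (B ∩ D F).encard
      rw [Set.union_inter_distrib_right]
      exact Set.encard_union_eq (hAB.mono Set.inter_subset_left Set.inter_subset_left)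
    · apply le_antisymm
      · exact iSup_le fun A => iSup_le fun hA => measurable_iff_comap_le.1 (hXimeas A hA)
      · apply MeasurableSpace.generateFrom_le
        rintro s ⟨O, hO, rfl⟩
        have hseq : {F : EffrosStar τ | (F.1 ∩ O).Nonempty} = Ξ O ⁻¹' {0}ᶜ := by
          ext F
          simp only [Set.mem_setOf_eq, Set.mem_preimage, Set.mem_compl_iff,
            Set.mem_singleton_iff]
          show _ ↔ ¬(O ∩ D F).encard = 0
          rw [← Ne, Set.encard_ne_zero]
          constructor
          · intro h
            exact hDmeet F O hO h
          · rintro ⟨x, hxO, hxD⟩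
            exact ⟨x, hDsub F hxD, hxO⟩
        rw [hseq]
        have hcm : MeasurableSet[MeasurableSpace.comap (Ξ O) inferInstance] (Ξ O ⁻¹' {0}ᶜ) :=
          ⟨{0}ᶜ, MeasurableSet.of_discrete, rfl⟩
        have hle : MeasurableSpace.comap (Ξ O) inferInstance ≤
            ⨆ (A : Set X) (_ : MeasurableSet A), MeasurableSpace.comap (Ξ A) inferInstance :=
          le_iSup₂ (f := fun (A : Set X) (_ : MeasurableSet A) =>
            MeasurableSpace.comap (Ξ A) inferInstance) O hO.measurableSet
        exact hle _ hcm
    · intro O hO F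
      exact hopen F O hO
    · intro A O F hA hO hAO hfinFO
      show (A ∩ D F).encard = (A ∩ F.1).encard
      have h1 : O ∩ D F = O ∩ F.1 := hfincase F O hO hfinFO
      have e1 : A ∩ D F = A ∩ (O ∩ D F) := by
        rw [← Set.inter_assoc, Set.inter_eq_self_of_subset_left hAO]
      have e2 : A ∩ F.1 = A ∩ (O ∩ F.1) := by
        rw [← Set.inter_assoc, Set.inter_eq_self_of_subset_left hAO]
      rw [e1, h1, ← e2]
    · intro A F hA hdisc
      show (A ∩ D F).encard = (A ∩ F.1).encard
      have hDF : D F = F.1 := by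
        apply Set.Subset.antisymm (hDsub F)
        intro x hx
        obtain ⟨O, hO, hxO, hFO⟩ := hdisc x hx
        obtain ⟨n, hn⟩ := hd3 F O hO ⟨x, hx, hxO⟩
        have hmem : d n F ∈ F.1 ∩ O := ⟨hd1 n F, hn⟩
        rw [hFO] at hmem
        exact ⟨n, hmem⟩
      rw [hDF]


end
end
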